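/- Let ψ₁,...,ψ_K : [0,1] → R be linearly independent continuous functions and let A ∈ R^{p_1 × ... × p_D × K} satisfy Σ_{j ∈ J} Σ_{k=1}^K A_{j,k} ψ_k(X_j) = 0 for all X ∈ [0,1]^{p_1 × ... × p_D}, where additionally Σ_k A_{j,k} w_k = 0 for every multi-index j, with w_k = ∫_0^1 ψ_k(x) dx. Then A = 0. -/
import Mathlib


open Finset

/-- If `ψ₁,…,ψ_K` are linearly independent continuous functions on `[0,1]`,
and `A` satisfies `Σ_j Σ_k A_{j,k} ψ_k(X_j) = 0` for all `X` in the cube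
together with the mean-zero constraint `Σ_k A_{j,k} w_k = 0`
(`w_k = ∫₀¹ ψ_k`) for every multi-index `j`, then `A = 0`. -/
theorem broadcast_linear_independence_zero
    (D K : ℕ) (p : Fin D → ℕ)
    (ψ : Fin K → ℝ → ℝ)
    (hψc : ∀ k, Continuous (ψ k))
    (hψli : LinearIndependent ℝ (fun k : Fin K =>
      (Set.Icc (0:ℝ) 1).restrict (ψ k)))
    (A : ((d : Fin D) → Fin (p d)) → Fin K → ℝ)
    (hzero : ∀ X : ((d : Fin D) → Fin (p d)) → ℝ,
      (∀ j, X j ∈ Set.Icc (0:ℝ) 1) →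
      ∑ j, ∑ k, A j k * ψ k (X j) = 0)
    (hmean : ∀ j, ∑ k, A j k * (∫ x in (0:ℝ)..1, ψ k x) = 0) :
    A = 0 := by
  funext j₀ k₀
  classical
  set S : ℝ := ∑ j ∈ Finset.univ.erase j₀, ∑ k, A j k * ψ k 0 with hS
  -- key pointwise identity on [0,1]
  have key : ∀ t ∈ Set.Icc (0:ℝ) 1, (∑ k, A j₀ k * ψ k t) + S = 0 := by
    intro t ht
    have hmem : ∀ j : (d : Fin D) → Fin (p d),
        (if j = j₀ then t else 0) ∈ Set.Icc (0:ℝ) 1 := by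
      intro j
      by_cases h : j = j₀ <;> simp [h, ht]
    have h := hzero (fun j => if j = j₀ then t else 0) hmem
    rw [← Finset.add_sum_erase Finset.univ _ (Finset.mem_univ j₀)] at h
    simp only [if_pos rfl] at h
    have : ∑ j ∈ Finset.univ.erase j₀, ∑ k, A j k * ψ k (if j = j₀ then t else 0) = S := by
      apply Finset.sum_congr rfl
      intro j hj
      have hne : j ≠ j₀ := Finset.ne_of_mem_erase hj
      simp [hne]
    rw [this] at h
    exact h
  -- integrate over [0,1]
  have hgint : ∀ k : Fin K, IntervalIntegrable (ψ k) MeasureTheory.volume 0 1 :=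
    fun k => (hψc k).intervalIntegrable 0 1
  have hint1 : (∫ t in (0:ℝ)..1, ∑ k, A j₀ k * ψ k t) = 0 := by
    rw [intervalIntegral.integral_finset_sum
      (fun k _ => (hgint k).const_mul (A j₀ k))]
    have : ∀ k : Fin K, (∫ t in (0:ℝ)..1, A j₀ k * ψ k t)
        = A j₀ k * ∫ t in (0:ℝ)..1, ψ k t := fun k =>
      intervalIntegral.integral_const_mul _ _
    simp_rw [this]
    exact hmean j₀
  have hint2 : (∫ t in (0:ℝ)..1, ∑ k, A j₀ k * ψ k t) = -S := by
    have hcong : (∫ t in (0:ℝ)..1, ∑ k, A j₀ k * ψ k t)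
        = ∫ t in (0:ℝ)..1, (-S : ℝ) := by
      apply intervalIntegral.integral_congr
      intro t ht
      rw [Set.uIcc_of_le (by norm_num : (0:ℝ) ≤ 1)] at ht
      have := key t ht
      show (∑ k, A j₀ k * ψ k t) = -S
      linarith
    rw [hcong]
    simp
  have hSzero : S = 0 := by
    rw [hint1] at hint2; linarith
  -- so the combination vanishes on [0,1]
  have hcomb : (∑ k, A j₀ k • ((Set.Icc (0:ℝ) 1).restrict (ψ k))) = 0 := by
    funext x
    have := key x.1 x.2
    rw [hSzero] at this
    simpa [Set.restrict, smul_eq_mul] using this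
  have := Fintype.linearIndependent_iff.mp hψli (fun k => A j₀ k) hcomb k₀
  simpa using this
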